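/- For integers j, k, n with 0 ≤ j and n ≥ 0, define c_{kj}(n) = c_{k0}(n) (-1)^j ((-2ℓ)_j (-k-n)_j / (j! (2ℓ+2)_j)) · ₄F₃(-j, j+1, -k, -2ℓ-n-1; 1, -k-n, -2ℓ; 1), where c_{k0}(n) = (-1)^n 4^{-n} n! (2ℓ+2)_n / ((k+1)_n (2ℓ-k+1)_n). Then c_{kj}(n) satisfies the three-term recurrence -((i+k+n+1)(i-k-n-1)(2ℓ-i+1)/(2i+1)) c_{k,i-1}(n) + (i(i+1) - 4ℓ(ℓ+1)) c_{k,i}(n) + ((i+1)²(2ℓ+i+2)/(2i+1)) c_{k,i+1}(n) = (-2n(ℓ-k) + (2ℓ+2)(k-2ℓ)) c_{k,i}(n), with convention c_{k,-1}(n) = 0. -/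

import Mathlib

/-- Pochhammer symbol (rising factorial) `(a)_k`. -/
noncomputable def poch (a : ℝ) (k : ℕ) : ℝ := ∏ i ∈ Finset.range k, (a + i)

/-- The leading coefficient `c_{k0}(n) = (-1)^n 4^{-n} n!(2ℓ+2)_n/((k+1)_n (2ℓ-k+1)_n)`
with `L = 2ℓ`. -/
noncomputable def ck0 (L k n : ℕ) : ℝ :=
  (-1)^n * (1/4^n) * (Nat.factorial n : ℝ) * poch ((L:ℝ)+2) n
    / (poch ((k:ℝ)+1) n * poch ((L:ℝ)-(k:ℝ)+1) n)

/-- The coefficient `c_{kj}(n)`, involving the Racah polynomial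
`₄F₃(-j, j+1, -k, -2ℓ-n-1; 1, -k-n, -2ℓ; 1)` (terminating at `min j k`). -/
noncomputable def ckj (L k n j : ℕ) : ℝ :=
  ck0 L k n * (-1)^j
    * (poch (-(L:ℝ)) j * poch (-(k:ℝ)-(n:ℝ)) j / ((Nat.factorial j : ℝ) * poch ((L:ℝ)+2) j))
    * ∑ s ∈ Finset.range (min j k + 1),
        poch (-(j:ℝ)) s * poch ((j:ℝ)+1) s * poch (-(k:ℝ)) s * poch (-(L:ℝ)-(n:ℝ)-1) s /
          (poch 1 s * poch (-(k:ℝ)-(n:ℝ)) s * poch (-(L:ℝ)) s * (Nat.factorial s : ℝ))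

lemma poch_zero (a : ℝ) : poch a 0 = 1 := by simp [poch]

lemma poch_succ (a : ℝ) (s : ℕ) : poch a (s+1) = poch a s * (a + s) := by
  simp [poch, Finset.prod_range_succ]

lemma poch_succ' (a : ℝ) (s : ℕ) : poch a (s+1) = a * poch (a+1) s := by
  rw [poch, Finset.prod_range_succ']
  rw [mul_comm]
  congr 1
  · norm_num
  · rw [poch]
    apply Finset.prod_congr rfl
    intro r _
    push_cast
    ring

lemma poch_pos {a : ℝ} (ha : 0 < a) (s : ℕ) : 0 < poch a s := by
  apply Finset.prod_pos
  intro r _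
  positivity

lemma poch_nat_zero {j s : ℕ} (h : j < s) : poch (-(j:ℝ)) s = 0 := by
  apply Finset.prod_eq_zero (Finset.mem_range.2 h)
  simp

lemma poch_nat_ne {m s : ℕ} (h : s ≤ m) : poch (-(m:ℝ)) s ≠ 0 := by
  apply Finset.prod_ne_zero_iff.2
  intro r hr
  rw [Finset.mem_range] at hr
  have hrm : r < m := lt_of_lt_of_le hr h
  have : (r:ℝ) < m := by exact_mod_cast hrm
  intro hc
  linarith

noncomputable def gg (x : ℝ) (s : ℕ) : ℝ := poch (-x) s * poch (x+1) s

noncomputable def hh (L k n s : ℕ) : ℝ :=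
  poch (-(k:ℝ)) s * poch (-(L:ℝ)-(n:ℝ)-1) s /
    (poch 1 s * poch (-(k:ℝ)-(n:ℝ)) s * poch (-(L:ℝ)) s * (Nat.factorial s : ℝ))

lemma keyE (L k n i s : ℕ) :
    ((i:ℝ)-(L:ℝ))*((i:ℝ)-(k:ℝ)-(n:ℝ))*((i:ℝ)+1)*(gg ((i:ℝ)+1) s - gg (i:ℝ) s)
      + (i:ℝ)*((i:ℝ)+(L:ℝ)+1)*((i:ℝ)+(k:ℝ)+(n:ℝ)+1)*(gg ((i:ℝ)-1) s - gg (i:ℝ) s)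
    = 2*(2*(i:ℝ)+1)*((s:ℝ)*((s:ℝ)-((L:ℝ)+(k:ℝ)+(n:ℝ)+1))*gg (i:ℝ) s
        - (s:ℝ)^2*((L:ℝ)-(s:ℝ)+1)*((k:ℝ)+(n:ℝ)-(s:ℝ)+1)*gg (i:ℝ) (s-1)) := by
  cases i with
  | zero =>
    match s with
    | 0 => simp [gg, poch]
    | 1 =>
      simp only [Nat.cast_zero, Nat.cast_one]
      norm_num [gg, poch, Finset.prod_range_succ]
      ring
    | (m+2) =>
      have z1 : gg ((0:ℝ)+1) (m+2) = 0 := by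
        have h := poch_nat_zero (j := 1) (s := m+2) (by omega)
        simp at h
        simp [gg, h]
      have z2 : gg (0:ℝ) (m+2) = 0 := by
        have h := poch_nat_zero (j := 0) (s := m+2) (by omega)
        simp at h
        simp [gg, h]
      have z3 : gg ((0:ℝ)-1) (m+2) = 0 := by
        have h := poch_nat_zero (j := 0) (s := m+2) (by omega)
        simp at h
        simp [gg, h]
      have z4 : gg (0:ℝ) (m+2-1) = 0 := by
        have h := poch_nat_zero (j := 0) (s := m+1) (by omega)
        simp at h
        simp [gg, h]
      simp only [Nat.cast_zero]
      rw [z1, z2, z3, z4]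
      ring
  | succ m =>
    set x : ℝ := (m:ℝ)+1 with hxdef
    have hx : x ≠ 0 := by positivity
    have hx1 : x + 1 ≠ 0 := by positivity
    have hcast : ((m+1:ℕ):ℝ) = x := by push_cast; rfl
    rw [hcast]
    cases s with
    | zero => simp [gg, poch]
    | succ t =>
      set a : ℝ := poch (-x) t with hadef
      set b : ℝ := poch (x+1) t with hbdef
      have E1 : poch (-x) (t+1) = a * (-x + t) := poch_succ _ _
      have E2 : poch (x+1) (t+1) = b * (x+1+t) := poch_succ _ _
      have E3 : poch (-(x+1)) (t+1) = -(x+1) * a := by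
        rw [poch_succ' (-(x+1)) t]
        have : -(x+1)+1 = -x := by ring
        rw [this]
      have E4 : poch (x+1+1) (t+1) = b * (x+1+t) * (x+1+(t+1)) / (x+1) := by
        have h1 : poch (x+1) (t+1+1) = (x+1) * poch (x+1+1) (t+1) := poch_succ' _ _
        have h2 : poch (x+1) (t+1+1) = b * (x+1+t) * (x+1+(t+1)) := by
          rw [poch_succ, poch_succ]
          push_cast
          ring
        rw [h2] at h1
        field_simp at h1 ⊢
        linarith [h1]
      have E5 : poch (-(x-1)) (t+1) = a * (-x+t) * (-x+(t+1)) / (-x) := by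
        have h1 : poch (-x) (t+1+1) = (-x) * poch (-x+1) (t+1) := poch_succ' _ _
        have h2 : poch (-x) (t+1+1) = a * (-x+t) * (-x+(t+1)) := by
          rw [poch_succ, poch_succ]
          push_cast
          ring
        have h3 : -(x-1) = -x+1 := by ring
        rw [h2] at h1
        rw [h3]
        have hnx : (-x) ≠ 0 := by simpa using hx
        field_simp at h1 ⊢
        linarith [h1]
      have E6 : poch (x-1+1) (t+1) = x * b := by
        have h3 : x-1+1 = x := by ring
        rw [h3, poch_succ' x t]
      have G0 : gg x (t+1) = a*b*(-x+t)*(x+1+t) := by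
        rw [gg, E1, E2]; ring
      have G0' : gg x t = a*b := rfl
      have Gp : gg (x+1) (t+1) = -(a*b)*(x+1+t)*(x+1+(t+1)) := by
        rw [gg, E3, E4]
        field_simp
      have Gm : gg (x-1) (t+1) = -(a*b)*(-x+t)*(-x+(t+1)) := by
        rw [gg, E5, E6]
        have hnx : (-x) ≠ 0 := by simpa using hx
        field_simp
      rw [Nat.add_sub_cancel]
      rw [Gp, Gm, G0, G0']
      push_cast
      ring

lemma star (L k n s : ℕ) (hkL : k ≤ L) (hs : s < k) :
    (s:ℝ)*((s:ℝ)-((L:ℝ)+(k:ℝ)+(n:ℝ)+1)) * hh L k n s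
      - ((s:ℝ)+1)^2*((L:ℝ)-(s:ℝ))*((k:ℝ)+(n:ℝ)-(s:ℝ)) * hh L k n (s+1)
    = -(k:ℝ)*((L:ℝ)+(n:ℝ)+1) * hh L k n s := by
  have hkn : -(k:ℝ)-(n:ℝ) = -((k+n:ℕ):ℝ) := by push_cast; ring
  have hd1 : poch 1 s ≠ 0 := ne_of_gt (poch_pos one_pos s)
  have hd2 : poch (-(k:ℝ)-(n:ℝ)) s ≠ 0 := by
    rw [hkn]; exact poch_nat_ne (by omega)
  have hd3 : poch (-(L:ℝ)) s ≠ 0 := poch_nat_ne (by omega)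
  have hd4 : ((Nat.factorial s : ℕ):ℝ) ≠ 0 := by
    exact_mod_cast Nat.factorial_ne_zero s
  have hf1 : (1:ℝ) + s ≠ 0 := by positivity
  have hf2 : -(k:ℝ)-(n:ℝ) + s ≠ 0 := by
    have : (s:ℝ) < (k:ℝ)+(n:ℝ) := by
      have : s < k + n := by omega
      exact_mod_cast this
    intro hc; linarith
  have hf3 : -(L:ℝ) + s ≠ 0 := by
    have : (s:ℝ) < (L:ℝ) := by exact_mod_cast lt_of_lt_of_le hs hkL
    intro hc; linarith
  have hf4 : ((s:ℝ)+1) ≠ 0 := by positivity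
  unfold hh
  rw [poch_succ, poch_succ, poch_succ, poch_succ, poch_succ, Nat.factorial_succ]
  push_cast
  field_simp
  ring

lemma de (L k n : ℕ) (hkL : k ≤ L) (i : ℕ) :
    ((i:ℝ)-(L:ℝ))*((i:ℝ)-(k:ℝ)-(n:ℝ))*((i:ℝ)+1)
        * (∑ s ∈ Finset.range (k+1), hh L k n s * gg ((i:ℝ)+1) s)
      + (i:ℝ)*((i:ℝ)+(L:ℝ)+1)*((i:ℝ)+(k:ℝ)+(n:ℝ)+1)
        * (∑ s ∈ Finset.range (k+1), hh L k n s * gg ((i:ℝ)-1) s)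
      - (((i:ℝ)-(L:ℝ))*((i:ℝ)-(k:ℝ)-(n:ℝ))*((i:ℝ)+1)
          + (i:ℝ)*((i:ℝ)+(L:ℝ)+1)*((i:ℝ)+(k:ℝ)+(n:ℝ)+1)
          - 2*(2*(i:ℝ)+1)*((k:ℝ)*((L:ℝ)+(n:ℝ)+1)))
        * (∑ s ∈ Finset.range (k+1), hh L k n s * gg (i:ℝ) s) = 0 := by
  set x : ℝ := (i:ℝ) with hxdef
  have expand :
      ((x-(L:ℝ))*(x-(k:ℝ)-(n:ℝ))*(x+1)) * (∑ s ∈ Finset.range (k+1), hh L k n s * gg (x+1) s)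
        + (x*(x+(L:ℝ)+1)*(x+(k:ℝ)+(n:ℝ)+1)) * (∑ s ∈ Finset.range (k+1), hh L k n s * gg (x-1) s)
        - (((x-(L:ℝ))*(x-(k:ℝ)-(n:ℝ))*(x+1) + x*(x+(L:ℝ)+1)*(x+(k:ℝ)+(n:ℝ)+1)
            - 2*(2*x+1)*((k:ℝ)*((L:ℝ)+(n:ℝ)+1))))
          * (∑ s ∈ Finset.range (k+1), hh L k n s * gg x s)
      = ∑ s ∈ Finset.range (k+1),
          (hh L k n s *
            ((x-(L:ℝ))*(x-(k:ℝ)-(n:ℝ))*(x+1)*(gg (x+1) s - gg x s)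
              + x*(x+(L:ℝ)+1)*(x+(k:ℝ)+(n:ℝ)+1)*(gg (x-1) s - gg x s))
            + 2*(2*x+1)*((k:ℝ)*((L:ℝ)+(n:ℝ)+1)) * (hh L k n s * gg x s)) := by
    rw [Finset.mul_sum, Finset.mul_sum, Finset.mul_sum, ← Finset.sum_add_distrib,
      ← Finset.sum_sub_distrib]
    apply Finset.sum_congr rfl
    intro s _
    ring
  rw [expand]
  have step1 : ∀ s ∈ Finset.range (k+1),
      (hh L k n s *
          ((x-(L:ℝ))*(x-(k:ℝ)-(n:ℝ))*(x+1)*(gg (x+1) s - gg x s)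
            + x*(x+(L:ℝ)+1)*(x+(k:ℝ)+(n:ℝ)+1)*(gg (x-1) s - gg x s))
          + 2*(2*x+1)*((k:ℝ)*((L:ℝ)+(n:ℝ)+1)) * (hh L k n s * gg x s))
      = ((2*(2*x+1)*((s:ℝ)*((s:ℝ)-((L:ℝ)+(k:ℝ)+(n:ℝ)+1))) + 2*(2*x+1)*((k:ℝ)*((L:ℝ)+(n:ℝ)+1)))
            * hh L k n s * gg x s
          - 2*(2*x+1)*(s:ℝ)^2*((L:ℝ)-(s:ℝ)+1)*((k:ℝ)+(n:ℝ)-(s:ℝ)+1) * hh L k n s * gg x (s-1)) := by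
    intro s _
    have hK := keyE L k n i s
    rw [← hxdef] at hK
    rw [hK]
    ring
  rw [Finset.sum_congr rfl step1]
  rw [Finset.sum_sub_distrib]
  have first : ∑ s ∈ Finset.range (k+1),
      (2*(2*x+1)*((s:ℝ)*((s:ℝ)-((L:ℝ)+(k:ℝ)+(n:ℝ)+1))) + 2*(2*x+1)*((k:ℝ)*((L:ℝ)+(n:ℝ)+1)))
        * hh L k n s * gg x s
      = ∑ s ∈ Finset.range k,
        (2*(2*x+1)*((s:ℝ)*((s:ℝ)-((L:ℝ)+(k:ℝ)+(n:ℝ)+1))) + 2*(2*x+1)*((k:ℝ)*((L:ℝ)+(n:ℝ)+1)))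
          * hh L k n s * gg x s := by
    rw [Finset.sum_range_succ]
    have : (2*(2*x+1)*((k:ℝ)*((k:ℝ)-((L:ℝ)+(k:ℝ)+(n:ℝ)+1))) + 2*(2*x+1)*((k:ℝ)*((L:ℝ)+(n:ℝ)+1))) = 0 := by
      ring
    rw [this]
    simp
  have second : ∑ s ∈ Finset.range (k+1),
      2*(2*x+1)*(s:ℝ)^2*((L:ℝ)-(s:ℝ)+1)*((k:ℝ)+(n:ℝ)-(s:ℝ)+1) * hh L k n s * gg x (s-1)
      = ∑ s ∈ Finset.range k,
        2*(2*x+1)*((s:ℝ)+1)^2*((L:ℝ)-(s:ℝ))*((k:ℝ)+(n:ℝ)-(s:ℝ)) * hh L k n (s+1) * gg x s := by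
    rw [Finset.sum_range_succ']
    norm_num
    apply Finset.sum_congr rfl
    intro s _
    ring
  rw [first, second, ← Finset.sum_sub_distrib]
  apply Finset.sum_eq_zero
  intro s hs
  rw [Finset.mem_range] at hs
  have hstar := star L k n s hkL hs
  linear_combination (2*(2*x+1) * gg x s) * hstar

lemma sum_ext (L k n j : ℕ) :
    (∑ s ∈ Finset.range (min j k + 1),
        poch (-(j:ℝ)) s * poch ((j:ℝ)+1) s * poch (-(k:ℝ)) s * poch (-(L:ℝ)-(n:ℝ)-1) s /
          (poch 1 s * poch (-(k:ℝ)-(n:ℝ)) s * poch (-(L:ℝ)) s * (Nat.factorial s : ℝ)))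
    = ∑ s ∈ Finset.range (k+1), hh L k n s * gg ((j:ℕ):ℝ) s := by
  have h1 : ∀ s : ℕ, poch (-(j:ℝ)) s * poch ((j:ℝ)+1) s * poch (-(k:ℝ)) s * poch (-(L:ℝ)-(n:ℝ)-1) s /
          (poch 1 s * poch (-(k:ℝ)-(n:ℝ)) s * poch (-(L:ℝ)) s * (Nat.factorial s : ℝ))
        = hh L k n s * gg ((j:ℕ):ℝ) s := by
    intro s; unfold hh gg; ring
  simp only [h1]
  apply Finset.sum_subset
  · apply Finset.range_subset_range.2; omega
  · intro s hs hns
    rw [Finset.mem_range] at hs hns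
    have hjs : j < s := by omega
    rw [gg, poch_nat_zero hjs, zero_mul, mul_zero]

lemma ckj_eq (L k n j : ℕ) :
    ckj L k n j = ck0 L k n * ((-1:ℝ)^j
      * (poch (-(L:ℝ)) j * poch (-(k:ℝ)-(n:ℝ)) j / ((Nat.factorial j : ℝ) * poch ((L:ℝ)+2) j)))
      * ∑ s ∈ Finset.range (k+1), hh L k n s * gg ((j:ℕ):ℝ) s := by
  unfold ckj
  rw [sum_ext]
  ring


/-- The three-term (contiguous Racah) recurrence satisfied by the `c_{kj}(n)`
(with `ℓ = L/2`, `c_{k,-1}(n) = 0`). -/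
theorem ckj_recurrence (L k n : ℕ) (hL : 1 ≤ L) (hk : k ≤ L) (i : ℕ) :
    -((((i:ℝ)+(k:ℝ)+(n:ℝ)+1)*((i:ℝ)-(k:ℝ)-(n:ℝ)-1)*(2*((L:ℝ)/2)-(i:ℝ)+1))/(2*(i:ℝ)+1))
        * (if i = 0 then 0 else ckj L k n (i-1))
      + ((i:ℝ)*((i:ℝ)+1) - 4*((L:ℝ)/2)*(((L:ℝ)/2)+1)) * ckj L k n i
      + ((((i:ℝ)+1)^2*(2*((L:ℝ)/2)+(i:ℝ)+2))/(2*(i:ℝ)+1)) * ckj L k n (i+1)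
    = (-2*(n:ℝ)*(((L:ℝ)/2)-(k:ℝ)) + (2*((L:ℝ)/2)+2)*((k:ℝ)-2*((L:ℝ)/2))) * ckj L k n i := by
  cases i with
  | zero =>
    have hde := de L k n hk 0
    norm_num at hde
    simp only [if_pos rfl, mul_zero, Nat.cast_zero, zero_add]
    rw [ckj_eq L k n 0, ckj_eq L k n 1]
    norm_num [poch_zero, poch_succ, Nat.factorial]
    have hL2 : ((L:ℝ)+2) ≠ 0 := by positivity
    field_simp
    linear_combination (-4*ck0 L k n) * hde
  | succ m =>
    have hde := de L k n hk (m+1)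
    push_cast at hde
    rw [show ((m:ℝ)+1)-1 = (m:ℝ) from by ring] at hde
    simp only [Nat.add_sub_cancel, Nat.succ_ne_zero, if_false]
    rw [ckj_eq L k n m, ckj_eq L k n (m+1), ckj_eq L k n (m+1+1)]
    simp only [poch_succ, pow_succ, Nat.factorial_succ]
    push_cast
    have h1 : ((Nat.factorial m : ℕ):ℝ) ≠ 0 := by exact_mod_cast Nat.factorial_ne_zero m
    have h2 : poch ((L:ℝ)+2) m ≠ 0 := ne_of_gt (poch_pos (by positivity) m)
    have h3 : (m:ℝ)+1 ≠ 0 := by positivity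
    have h4 : (m:ℝ)+2 ≠ 0 := by positivity
    have h5 : (L:ℝ)+2+(m:ℝ) ≠ 0 := by positivity
    have h6 : (L:ℝ)+2+((m:ℝ)+1) ≠ 0 := by positivity
    have h7 : 2*((m:ℝ)+1)+1 ≠ 0 := by positivity
    field_simp
    linear_combination (ck0 L k n * poch (-(L:ℝ)) m * poch (-(k:ℝ)-(n:ℝ)) m * 4 * (-(L:ℝ)+(m:ℝ)) * (-(k:ℝ)-(n:ℝ)+(m:ℝ)) * ((L:ℝ)+(m:ℝ)+3)) * hde
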